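/- Let m > 0 be a real number and let f : [0,1] → ℝ be continuous. Define v(x) = ∫_0^1 g(m,x,y)·f(y) dy for x ∈ [0,1]. Then v is twice continuously differentiable on [0,1], v(0) = v(1) = 0, and −v''(x) + m²·v(x) = f(x) for all x ∈ [0,1]; moreover v is the unique function with these properties. -/

import Mathlib

open MeasureTheory Set

/-- The Green's function `g(m,x,y)` of the problem `−v'' + m² v = f`, `v(0)=v(1)=0`,
for `m > 0`. -/
noncomputable def gR (m x y : ℝ) : ℝ :=
  if y ≤ x then
    -(Real.sinh (m * (x - 1)) * Real.sinh (m * y)) / (m * Real.sinh m)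
  else
    -(Real.sinh (m * x) * Real.sinh (m * (y - 1))) / (m * Real.sinh m)

/-- `v : [0,1] → ℝ` is a solution of the Dirichlet BVP `−v'' + m² v = f` on `[0,1]`,
`v 0 = v 1 = 0`, being twice continuously differentiable on `[0,1]`. -/
def IsSolBVP (m : ℝ) (f v : ℝ → ℝ) : Prop :=
  ∃ v' v'' : ℝ → ℝ,
    (∀ x ∈ Set.Icc (0 : ℝ) 1, HasDerivWithinAt v (v' x) (Set.Icc 0 1) x) ∧
    (∀ x ∈ Set.Icc (0 : ℝ) 1, HasDerivWithinAt v' (v'' x) (Set.Icc 0 1) x) ∧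
    ContinuousOn v' (Set.Icc 0 1) ∧
    ContinuousOn v'' (Set.Icc 0 1) ∧
    v 0 = 0 ∧ v 1 = 0 ∧
    (∀ x ∈ Set.Icc (0 : ℝ) 1, -v'' x + m ^ 2 * v x = f x)

/-- FTC helper: the primitive of a function continuous on `[0,1]` has the expected
derivative within `[0,1]`. -/
lemma primitive_hasDerivWithinAt {h : ℝ → ℝ} (hh : ContinuousOn h (Set.Icc 0 1))
    {x : ℝ} (hx : x ∈ Set.Icc (0:ℝ) 1) :
    HasDerivWithinAt (fun u => ∫ t in (0:ℝ)..u, h t) (h x) (Set.Icc 0 1) x := by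
  haveI : Fact (x ∈ Set.Icc (0:ℝ) 1) := ⟨hx⟩
  refine intervalIntegral.integral_hasDerivWithinAt_right ?_ ?_ (hh x hx)
  · exact (hh.mono (by rw [Set.uIcc_of_le hx.1]; exact Icc_subset_Icc le_rfl hx.2)).intervalIntegrable
  · exact ⟨Set.Icc 0 1, self_mem_nhdsWithin, hh.aestronglyMeasurable measurableSet_Icc⟩

/-- Constancy helper: zero derivative within `[0,1]` implies constant. -/
lemma const_of_derivWithin_zero_Icc {F : ℝ → ℝ}
    (hF : ∀ x ∈ Set.Icc (0:ℝ) 1, HasDerivWithinAt F 0 (Set.Icc 0 1) x) :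
    ∀ x ∈ Set.Icc (0:ℝ) 1, F x = F 0 := by
  apply constant_of_has_deriv_right_zero
  · exact fun x hx => (hF x hx).continuousWithinAt
  · intro x hx
    refine (hF x ⟨hx.1, hx.2.le⟩).mono_of_mem_nhdsWithin ?_
    refine mem_nhdsWithin.mpr ⟨Set.Iio 1, isOpen_Iio, hx.2, ?_⟩
    rintro y ⟨h1, h2⟩
    exact ⟨hx.1.trans h2, le_of_lt h1⟩

/-- Uniqueness for the BVP. -/
lemma bvp_unique (m : ℝ) (hm : 0 < m) (f w₁ w₂ : ℝ → ℝ)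
    (h₁ : IsSolBVP m f w₁) (h₂ : IsSolBVP m f w₂) :
    ∀ x ∈ Set.Icc (0:ℝ) 1, w₁ x = w₂ x := by
  obtain ⟨p', p'', hp1, hp2, _, _, hp0, hp1', hpe⟩ := h₁
  obtain ⟨q', q'', hq1, hq2, _, _, hq0, hq1', hqe⟩ := h₂
  set u : ℝ → ℝ := fun x => w₁ x - w₂ x with hu
  set u' : ℝ → ℝ := fun x => p' x - q' x with hu'
  have hud : ∀ x ∈ Set.Icc (0:ℝ) 1, HasDerivWithinAt u (u' x) (Set.Icc 0 1) x :=
    fun x hx => (hp1 x hx).sub (hq1 x hx)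
  have hud2 : ∀ x ∈ Set.Icc (0:ℝ) 1,
      HasDerivWithinAt u' (m ^ 2 * u x) (Set.Icc 0 1) x := by
    intro x hx
    have := (hp2 x hx).sub (hq2 x hx)
    have he : p'' x - q'' x = m ^ 2 * u x := by
      have e1 := hpe x hx
      have e2 := hqe x hx
      simp only [hu]
      nlinarith [e1, e2]
    rwa [he] at this
  have hu0 : u 0 = 0 := by simp [hu, hp0, hq0]
  have hu1 : u 1 = 0 := by simp [hu, hp1', hq1']
  -- exponential invariants
  have hQ : ∀ x ∈ Set.Icc (0:ℝ) 1,
      (u' x - m * u x) * Real.exp (m * x) = u' 0 - m * u 0 := by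
    have := const_of_derivWithin_zero_Icc
      (F := fun x => (u' x - m * u x) * Real.exp (m * x)) ?_
    · intro x hx
      simpa using this x hx
    · intro x hx
      have hd : HasDerivWithinAt (fun x => (u' x - m * u x) * Real.exp (m * x))
          ((m ^ 2 * u x - m * u' x) * Real.exp (m * x)
            + (u' x - m * u x) * (Real.exp (m * x) * m)) (Set.Icc 0 1) x := by
        refine HasDerivWithinAt.mul ?_ ?_
        · exact (hud2 x hx).sub ((hud x hx).const_mul m)
        · exact ((Real.hasDerivAt_exp (m * x)).comp_hasDerivWithinAt x
            ((hasDerivWithinAt_id x _).const_mul m)).congr_deriv (by ring)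
      convert hd using 1
      ring
  have hP : ∀ x ∈ Set.Icc (0:ℝ) 1,
      (u' x + m * u x) * Real.exp (-(m * x)) = u' 0 + m * u 0 := by
    have := const_of_derivWithin_zero_Icc
      (F := fun x => (u' x + m * u x) * Real.exp (-(m * x))) ?_
    · intro x hx
      simpa using this x hx
    · intro x hx
      have hd : HasDerivWithinAt (fun x => (u' x + m * u x) * Real.exp (-(m * x)))
          ((m ^ 2 * u x + m * u' x) * Real.exp (-(m * x))
            + (u' x + m * u x) * (Real.exp (-(m * x)) * (-m))) (Set.Icc 0 1) x := by
        refine HasDerivWithinAt.mul ?_ ?_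
        · exact (hud2 x hx).add ((hud x hx).const_mul m)
        · exact ((Real.hasDerivAt_exp (-(m * x))).comp_hasDerivWithinAt x
            (((hasDerivWithinAt_id x _).const_mul m).neg)).congr_deriv (show _ = Real.exp (-(m * x)) * (-m) by ring)
      convert hd using 1
      ring
  have key : ∀ x ∈ Set.Icc (0:ℝ) 1,
      2 * m * u x = u' 0 * (Real.exp (m * x) - Real.exp (-(m * x))) := by
    intro x hx
    have h1 := hQ x hx
    have h2 := hP x hx
    have hEE : Real.exp (m * x) * Real.exp (-(m * x)) = 1 := by
      rw [← Real.exp_add]; simp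
    rw [hu0] at h1 h2
    linear_combination Real.exp (m*x) * h2 - Real.exp (-(m*x)) * h1 - 2*m*u x*hEE
  have hu'0 : u' 0 = 0 := by
    have h1 := key 1 (by norm_num)
    rw [hu1] at h1
    have hpos : Real.exp (m * 1) - Real.exp (-(m * 1)) > 0 := by
      have : -(m*1) < m*1 := by nlinarith
      have := Real.exp_lt_exp.mpr this
      linarith
    have := h1.symm
    rcases mul_eq_zero.mp (by linarith : u' 0 * (Real.exp (m*1) - Real.exp (-(m*1))) = 0) with h | h
    · exact h
    · linarith
  intro x hx
  have := key x hx
  rw [hu'0] at this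
  have hux : u x = 0 := by
    have h0 : 2 * m * u x = 0 := by rw [this]; ring
    rcases mul_eq_zero.mp h0 with h | h
    · exact absurd h (by positivity)
    · exact h
  simp only [hu] at hux
  linarith


noncomputable def Aint (m : ℝ) (f : ℝ → ℝ) (x : ℝ) : ℝ :=
  ∫ y in (0:ℝ)..x, Real.sinh (m * y) * f y

noncomputable def Cint (m : ℝ) (f : ℝ → ℝ) (x : ℝ) : ℝ :=
  ∫ y in (0:ℝ)..x, Real.sinh (m * (y - 1)) * f y

noncomputable def Vfun (m : ℝ) (f : ℝ → ℝ) (x : ℝ) : ℝ :=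
  -(Real.sinh (m * (x - 1)) * Aint m f x
    + Real.sinh (m * x) * (Cint m f 1 - Cint m f x)) / (m * Real.sinh m)

noncomputable def V1fun (m : ℝ) (f : ℝ → ℝ) (x : ℝ) : ℝ :=
  -(m * Real.cosh (m * (x - 1)) * Aint m f x
    + m * Real.cosh (m * x) * (Cint m f 1 - Cint m f x)) / (m * Real.sinh m)

section Green

variable {m : ℝ} {f : ℝ → ℝ}

lemma contA (hf : ContinuousOn f (Set.Icc 0 1)) :
    ContinuousOn (fun y => Real.sinh (m * y) * f y) (Set.Icc 0 1) :=
  ((Real.continuous_sinh.comp (continuous_const.mul continuous_id)).continuousOn).mul hf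

lemma contC (hf : ContinuousOn f (Set.Icc 0 1)) :
    ContinuousOn (fun y => Real.sinh (m * (y - 1)) * f y) (Set.Icc 0 1) :=
  ((Real.continuous_sinh.comp (continuous_const.mul (continuous_id.sub
    continuous_const))).continuousOn).mul hf

lemma hA (hf : ContinuousOn f (Set.Icc 0 1)) {x : ℝ} (hx : x ∈ Set.Icc (0:ℝ) 1) :
    HasDerivWithinAt (Aint m f) (Real.sinh (m * x) * f x) (Set.Icc 0 1) x :=
  primitive_hasDerivWithinAt (contA hf) hx

lemma hC (hf : ContinuousOn f (Set.Icc 0 1)) {x : ℝ} (hx : x ∈ Set.Icc (0:ℝ) 1) :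
    HasDerivWithinAt (Cint m f) (Real.sinh (m * (x - 1)) * f x) (Set.Icc 0 1) x :=
  primitive_hasDerivWithinAt (contC hf) hx

lemma v_eq (hm : 0 < m) (hf : ContinuousOn f (Set.Icc 0 1))
    {x : ℝ} (hx : x ∈ Set.Icc (0:ℝ) 1) :
    (∫ y in (0:ℝ)..1, gR m x y * f y) = Vfun m f x := by
  set c := m * Real.sinh m with hc
  set g1 : ℝ → ℝ := fun y => -(Real.sinh (m * (x - 1)) * Real.sinh (m * y)) / c * f y with hg1
  set g2 : ℝ → ℝ := fun y => -(Real.sinh (m * x) * Real.sinh (m * (y - 1))) / c * f y with hg2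
  have eq1 : Set.EqOn (fun y => gR m x y * f y) g1 (Set.Icc 0 x) := by
    intro y hy
    simp only [gR, hg1, if_pos hy.2, hc]
  have eq2 : Set.EqOn (fun y => gR m x y * f y) g2 (Set.Icc x 1) := by
    intro y hy
    by_cases hyx : y ≤ x
    · have hyx' : y = x := le_antisymm hyx hy.1
      subst hyx'
      simp only [gR, hg2, if_pos le_rfl]
      ring
    · simp only [gR, hg2, if_neg hyx, hc]
  have cont1 : ContinuousOn g1 (Set.Icc 0 x) := by
    apply ContinuousOn.mul
    · exact (Continuous.continuousOn (by continuity))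
    · exact hf.mono (Set.Icc_subset_Icc le_rfl hx.2)
  have cont2 : ContinuousOn g2 (Set.Icc x 1) := by
    apply ContinuousOn.mul
    · exact (Continuous.continuousOn (by continuity))
    · exact hf.mono (Set.Icc_subset_Icc hx.1 le_rfl)
  have int1 : IntervalIntegrable (fun y => gR m x y * f y) volume 0 x := by
    apply ContinuousOn.intervalIntegrable
    rw [Set.uIcc_of_le hx.1]
    exact cont1.congr eq1
  have int2 : IntervalIntegrable (fun y => gR m x y * f y) volume x 1 := by
    apply ContinuousOn.intervalIntegrable
    rw [Set.uIcc_of_le hx.2]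
    exact cont2.congr eq2
  have split : (∫ y in (0:ℝ)..x, gR m x y * f y) + (∫ y in x..(1:ℝ), gR m x y * f y)
      = ∫ y in (0:ℝ)..1, gR m x y * f y :=
    intervalIntegral.integral_add_adjacent_intervals int1 int2
  have piece1 : (∫ y in (0:ℝ)..x, gR m x y * f y)
      = (-(Real.sinh (m * (x - 1))) / c) * Aint m f x := by
    rw [intervalIntegral.integral_congr (g := g1) (by rw [Set.uIcc_of_le hx.1]; exact eq1)]
    have : ∀ y : ℝ, g1 y = (-(Real.sinh (m * (x - 1))) / c) * (Real.sinh (m * y) * f y) := by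
      intro y; simp only [hg1]; ring
    simp_rw [this]
    rw [intervalIntegral.integral_const_mul]
    rfl
  have intC0x : IntervalIntegrable (fun y => Real.sinh (m * (y - 1)) * f y) volume 0 x := by
    apply ContinuousOn.intervalIntegrable
    rw [Set.uIcc_of_le hx.1]
    exact (contC hf).mono (Set.Icc_subset_Icc le_rfl hx.2)
  have intC01 : IntervalIntegrable (fun y => Real.sinh (m * (y - 1)) * f y) volume 0 1 := by
    apply ContinuousOn.intervalIntegrable
    rw [Set.uIcc_of_le (by norm_num : (0:ℝ) ≤ 1)]
    exact contC hf
  have piece2 : (∫ y in x..(1:ℝ), gR m x y * f y)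
      = (-(Real.sinh (m * x)) / c) * (Cint m f 1 - Cint m f x) := by
    rw [intervalIntegral.integral_congr (g := g2) (by rw [Set.uIcc_of_le hx.2]; exact eq2)]
    have : ∀ y : ℝ, g2 y = (-(Real.sinh (m * x)) / c) * (Real.sinh (m * (y - 1)) * f y) := by
      intro y; simp only [hg2]; ring
    simp_rw [this]
    rw [intervalIntegral.integral_const_mul]
    rw [← intervalIntegral.integral_interval_sub_left intC01 intC0x]
    rfl
  rw [← split, piece1, piece2, Vfun]
  ring

lemma hV (hm : 0 < m) (hf : ContinuousOn f (Set.Icc 0 1))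
    {x : ℝ} (hx : x ∈ Set.Icc (0:ℝ) 1) :
    HasDerivWithinAt (Vfun m f) (V1fun m f x) (Set.Icc 0 1) x := by
  have hs1 : HasDerivWithinAt (fun x => Real.sinh (m * (x - 1)))
      (m * Real.cosh (m * (x - 1))) (Set.Icc 0 1) x := by
    have := (Real.hasDerivAt_sinh (m * (x - 1))).comp_hasDerivWithinAt x
      (((hasDerivWithinAt_id x (Set.Icc (0:ℝ) 1)).sub_const 1).const_mul m)
    simpa [mul_comm, Function.comp_def] using this
  have hs2 : HasDerivWithinAt (fun x => Real.sinh (m * x))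
      (m * Real.cosh (m * x)) (Set.Icc 0 1) x := by
    have := (Real.hasDerivAt_sinh (m * x)).comp_hasDerivWithinAt x
      ((hasDerivWithinAt_id x (Set.Icc (0:ℝ) 1)).const_mul m)
    simpa [mul_comm, Function.comp_def] using this
  have hB : HasDerivWithinAt (fun x => Cint m f 1 - Cint m f x)
      (-(Real.sinh (m * (x - 1)) * f x)) (Set.Icc 0 1) x := by
    simpa using (hC (m := m) hf hx).const_sub (Cint m f 1)
  have total := (((hs1.mul (hA (m := m) hf hx)).add (hs2.mul hB)).neg).div_const (m * Real.sinh m)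
  refine total.congr_deriv ?_
  simp only [V1fun]
  ring

lemma hV1 (hm : 0 < m) (hf : ContinuousOn f (Set.Icc 0 1))
    {x : ℝ} (hx : x ∈ Set.Icc (0:ℝ) 1) :
    HasDerivWithinAt (V1fun m f) (m ^ 2 * Vfun m f x - f x) (Set.Icc 0 1) x := by
  have hc1 : HasDerivWithinAt (fun x => m * Real.cosh (m * (x - 1)))
      (m * (m * Real.sinh (m * (x - 1)))) (Set.Icc 0 1) x := by
    have := ((Real.hasDerivAt_cosh (m * (x - 1))).comp_hasDerivWithinAt x
      (((hasDerivWithinAt_id x (Set.Icc (0:ℝ) 1)).sub_const 1).const_mul m)).const_mul m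
    simpa [mul_comm, mul_assoc, mul_left_comm] using this
  have hc2 : HasDerivWithinAt (fun x => m * Real.cosh (m * x))
      (m * (m * Real.sinh (m * x))) (Set.Icc 0 1) x := by
    have := ((Real.hasDerivAt_cosh (m * x)).comp_hasDerivWithinAt x
      ((hasDerivWithinAt_id x (Set.Icc (0:ℝ) 1)).const_mul m)).const_mul m
    simpa [mul_comm, mul_assoc, mul_left_comm] using this
  have hB : HasDerivWithinAt (fun x => Cint m f 1 - Cint m f x)
      (-(Real.sinh (m * (x - 1)) * f x)) (Set.Icc 0 1) x := by
    simpa using (hC (m := m) hf hx).const_sub (Cint m f 1)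
  have total := (((hc1.mul (hA (m := m) hf hx)).add (hc2.mul hB)).neg).div_const (m * Real.sinh m)
  refine total.congr_deriv ?_
  have hsm : Real.sinh m ≠ 0 := (Real.sinh_pos_iff.mpr hm).ne'
  have hm0 : m ≠ 0 := hm.ne'
  have hid : Real.sinh (m * x) * Real.cosh (m * (x - 1))
      - Real.cosh (m * x) * Real.sinh (m * (x - 1)) = Real.sinh m := by
    rw [← Real.sinh_sub]
    norm_num
    ring_nf
  simp only [Vfun]
  field_simp
  linear_combination (-f x) * hid

lemma green_is_sol (m : ℝ) (hm : 0 < m) (f : ℝ → ℝ) (hf : ContinuousOn f (Set.Icc 0 1)) :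
    IsSolBVP m f (fun x => ∫ y in (0:ℝ)..1, gR m x y * f y) := by
  refine ⟨V1fun m f, fun x => m ^ 2 * (∫ y in (0:ℝ)..1, gR m x y * f y) - f x,
    ?_, ?_, ?_, ?_, ?_, ?_, ?_⟩
  · intro x hx
    exact (hV hm hf hx).congr (fun y hy => v_eq hm hf hy) (v_eq hm hf hx)
  · intro x hx
    have := hV1 hm hf hx
    rwa [← v_eq hm hf hx] at this
  · exact fun x hx => (hV1 hm hf hx).continuousWithinAt
  · refine ContinuousOn.sub (continuousOn_const.mul ?_) hf
    exact fun x hx => ((hV hm hf hx).congr (fun y hy => v_eq hm hf hy)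
      (v_eq hm hf hx)).continuousWithinAt
  · have : ∀ y ∈ Set.uIcc (0:ℝ) 1, gR m 0 y * f y = 0 := by
      intro y hy
      rw [Set.uIcc_of_le (by norm_num : (0:ℝ) ≤ 1)] at hy
      by_cases hy0 : y ≤ 0
      · have : y = 0 := le_antisymm hy0 hy.1
        subst this
        simp [gR]
      · simp [gR, if_neg hy0]
    show (∫ y in (0:ℝ)..1, gR m 0 y * f y) = 0
    rw [intervalIntegral.integral_congr (g := fun _ => (0:ℝ)) this]
    simp
  · have : ∀ y ∈ Set.uIcc (0:ℝ) 1, gR m 1 y * f y = 0 := by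
      intro y hy
      rw [Set.uIcc_of_le (by norm_num : (0:ℝ) ≤ 1)] at hy
      simp [gR, if_pos hy.2]
    show (∫ y in (0:ℝ)..1, gR m 1 y * f y) = 0
    rw [intervalIntegral.integral_congr (g := fun _ => (0:ℝ)) this]
    simp
  · intro x hx
    ring

end Green

theorem green_function_solves_bvp
    (m : ℝ) (hm : 0 < m)
    (f : ℝ → ℝ) (hf : ContinuousOn f (Set.Icc 0 1)) :
    IsSolBVP m f (fun x => ∫ y in (0:ℝ)..1, gR m x y * f y) ∧
      ∀ w : ℝ → ℝ, IsSolBVP m f w →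
        ∀ x ∈ Set.Icc (0 : ℝ) 1, w x = ∫ y in (0:ℝ)..1, gR m x y * f y :=
  ⟨green_is_sol m hm f hf,
    fun w hw => bvp_unique m hm f w _ hw (green_is_sol m hm f hf)⟩
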